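/- arXiv:1711.11412 — 2 statements merged into one kernel-verified Lean document; each statement's English description precedes it below -/
import Mathlib

section
/- For every graph G with at least one vertex and every weight function w : V(G) → ℕ, the connected safe number satisfies cs(G,w) ≤ 2·s(G,w). -/
/-- Total weight of a set of vertices. -/
noncomputable def setWeight {V : Type*} (w : V → ℕ) (A : Set V) : ℕ := ∑ᶠ u ∈ A, w u

/-- `C` is the vertex set of a connected component of the subgraph of `G` induced by `S`. -/
def IsCompOf {V : Type*} (G : SimpleGraph V) (S C : Set V) : Prop :=
  C ⊆ S ∧ (G.induce C).Connected ∧ ∀ u ∈ C, ∀ v ∈ S, G.Adj u v → v ∈ C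

/-- `S` is a (nonempty) `w`-safe set of `G`: every component `D` of `G - S` adjacent to a
component `C` of `G[S]` satisfies `w(D) ≤ w(C)`. -/
def IsSafeSet {V : Type*} (G : SimpleGraph V) (w : V → ℕ) (S : Set V) : Prop :=
  S.Nonempty ∧ ∀ C D : Set V, IsCompOf G S C → IsCompOf G Sᶜ D →
    (∃ u ∈ C, ∃ v ∈ D, G.Adj u v) → setWeight w D ≤ setWeight w C

/-- The safe number `s(G,w)`: minimum weight of a `w`-safe set. -/
noncomputable def safeNum {V : Type*} (G : SimpleGraph V) (w : V → ℕ) : ℕ :=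
  sInf {m | ∃ S : Set V, IsSafeSet G w S ∧ setWeight w S = m}

/-- The connected safe number `cs(G,w)`: minimum weight of a connected `w`-safe set. -/
noncomputable def connSafeNum {V : Type*} (G : SimpleGraph V) (w : V → ℕ) : ℕ :=
  sInf {m | ∃ S : Set V, IsSafeSet G w S ∧ (G.induce S).Connected ∧ setWeight w S = m}


section Aux
variable {V : Type*} [Fintype V] (G : SimpleGraph V)
set_option linter.unusedSectionVars false

/-- weight lemmas -/
lemma setWeight_eq_sum (w : V → ℕ) (A : Set V) :
    setWeight w A = ∑ u ∈ A.toFinite.toFinset, w u := by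
  rw [setWeight, ← finsum_mem_coe_finset, Set.Finite.coe_toFinset]

lemma setWeight_mono (w : V → ℕ) {A B : Set V} (h : A ⊆ B) :
    setWeight w A ≤ setWeight w B := by
  rw [setWeight_eq_sum, setWeight_eq_sum]
  exact Finset.sum_le_sum_of_subset (by simpa using h)

lemma setWeight_union (w : V → ℕ) {A B : Set V} (h : Disjoint A B) :
    setWeight w (A ∪ B) = setWeight w A + setWeight w B :=
  finsum_mem_union h A.toFinite B.toFinite

/-- step inside a set -/
def Step (A : Set V) (u v : V) : Prop := u ∈ A ∧ v ∈ A ∧ G.Adj u v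

def Reach (A : Set V) (u v : V) : Prop := Relation.ReflTransGen (Step G A) u v

variable {G}

lemma Step.symm' {A : Set V} {u v : V} (h : Step G A u v) : Step G A v u :=
  ⟨h.2.1, h.1, h.2.2.symm⟩

lemma Reach.symm' {A : Set V} {u v : V} (h : Reach G A u v) : Reach G A v u :=
  by
    haveI : Std.Symm (Step G A) := ⟨fun _ _ h => Step.symm' h⟩
    exact (Relation.ReflTransGen.symmetric (r := Step G A)).symm _ _ h

lemma Reach.trans' {A : Set V} {u v x : V} (h : Reach G A u v) (h' : Reach G A v x) :
    Reach G A u x := Relation.ReflTransGen.trans h h'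

lemma Reach.mono' {A B : Set V} (hAB : A ⊆ B) {u v : V} (h : Reach G A u v) :
    Reach G B u v :=
  Relation.ReflTransGen.mono (r := Step G A) (p := Step G B)
    (by intro _ _ hs; exact ⟨hAB hs.1, hAB hs.2.1, hs.2.2⟩) u v h

lemma Reach.mem_right {A : Set V} {u v : V} (hu : u ∈ A) (h : Reach G A u v) : v ∈ A := by
  induction h with
  | refl => exact hu
  | tail _ hs _ => exact hs.2.1

/-- connectivity bridges -/
lemma connected_of_reach {A : Set V} (hne : A.Nonempty)
    (h : ∀ u ∈ A, ∀ v ∈ A, Reach G A u v) : (G.induce A).Connected := by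
  have key : ∀ {u v : V}, Reach G A u v → ∀ (hu : u ∈ A) (hv : v ∈ A),
      (G.induce A).Reachable ⟨u, hu⟩ ⟨v, hv⟩ := by
    intro u v huv
    induction huv with
    | refl => intro hu hv; rfl
    | @tail b c hub hbc ih =>
      intro hu hv
      exact (ih hu hbc.1).trans (SimpleGraph.Adj.reachable (by simpa using hbc.2.2))
  rw [SimpleGraph.connected_iff]
  refine ⟨?_, hne.to_subtype⟩
  rintro ⟨u, hu⟩ ⟨v, hv⟩
  exact key (h u hu v hv) hu hv

lemma reach_of_connected {A : Set V} (h : (G.induce A).Connected) :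
    ∀ u ∈ A, ∀ v ∈ A, Reach G A u v := by
  intro u hu v hv
  obtain ⟨p⟩ := h.preconnected ⟨u, hu⟩ ⟨v, hv⟩
  have key : ∀ {a b : A} (_ : (G.induce A).Walk a b), Reach G A a.1 b.1 := by
    intro a b p
    induction p with
    | nil => exact Relation.ReflTransGen.refl
    | @cons x y z hxy _ ih =>
      exact Relation.ReflTransGen.head ⟨x.2, y.2, by simpa using hxy⟩ ih
  exact key p

lemma nonempty_of_connected {A : Set V} (h : (G.induce A).Connected) : A.Nonempty := by
  have := h.nonempty
  exact Set.nonempty_coe_sort.mp this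

/-- components -/
def Comp (G : SimpleGraph V) (A : Set V) (v : V) : Set V := {u | Reach G A v u}

lemma mem_comp_self (A : Set V) (v : V) : v ∈ Comp G A v := Relation.ReflTransGen.refl

lemma comp_subset {A : Set V} {v : V} (hv : v ∈ A) : Comp G A v ⊆ A :=
  fun _ h => Reach.mem_right hv h

lemma comp_eq_of_mem {A : Set V} {u v : V} (h : u ∈ Comp G A v) :
    Comp G A u = Comp G A v := by
  ext x
  exact ⟨fun hx => Reach.trans' h hx, fun hx => Reach.trans' (Reach.symm' h) hx⟩

lemma reach_comp {A : Set V} {v : V} (hv : v ∈ A) :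
    ∀ u ∈ Comp G A v, Reach G (Comp G A v) v u := by
  intro u hu
  induction hu with
  | refl => exact Relation.ReflTransGen.refl
  | @tail b c hvb hbc ih =>
    exact Relation.ReflTransGen.tail ih
      ⟨hvb, Relation.ReflTransGen.tail hvb hbc, hbc.2.2⟩

lemma isCompOf_comp {A : Set V} {v : V} (hv : v ∈ A) : IsCompOf G A (Comp G A v) := by
  refine ⟨comp_subset hv, ?_, ?_⟩
  · refine connected_of_reach ⟨v, mem_comp_self A v⟩ ?_
    intro a ha b hb
    exact Reach.trans' (Reach.symm' (reach_comp hv a ha)) (reach_comp hv b hb)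
  · intro u hu x hx hadj
    exact Relation.ReflTransGen.tail hu ⟨Reach.mem_right hv hu, hx, hadj⟩

lemma compOf_eq_of_connected {A C : Set V} (hC : IsCompOf G A C)
    (hconn : ∀ u ∈ A, ∀ v ∈ A, Reach G A u v) : C = A := by
  obtain ⟨hCA, hCc, hclose⟩ := hC
  obtain ⟨c, hc⟩ := nonempty_of_connected hCc
  have key : ∀ {a : V}, Reach G A c a → a ∈ C := by
    intro a h
    induction h with
    | refl => exact hc
    | tail hcb hbx ih => exact hclose _ ih _ hbx.2.1 hbx.2.2
  exact Set.Subset.antisymm hCA (fun a ha => key (hconn c (hCA hc) a ha))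

end Aux

section Main
variable {V : Type*} [Fintype V] {G : SimpleGraph V} {w : V → ℕ}
set_option linter.unusedSectionVars false
set_option maxHeartbeats 1000000

lemma setWeight_empty (w : V → ℕ) : setWeight w (∅ : Set V) = 0 := by
  simp [setWeight]

/-- A "good" set: union of whole components, connected, with bounded complement part. -/
def Good (G : SimpleGraph V) (w : V → ℕ) (S T : Set V) : Prop :=
  T.Nonempty ∧
  (∀ v ∈ T ∩ S, Comp G S v ⊆ T) ∧
  (∀ v ∈ T \ S, Comp G Sᶜ v ⊆ T) ∧
  (∀ u ∈ T, ∀ v ∈ T, Reach G T u v) ∧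
  setWeight w (T \ S) ≤ setWeight w (T ∩ S)

lemma exists_connected_safe {S : Set V} (hS : IsSafeSet G w S) :
    ∃ T : Set V, IsSafeSet G w T ∧ (G.induce T).Connected ∧
      setWeight w T ≤ 2 * setWeight w S := by
  classical
  obtain ⟨⟨v0, hv0⟩, hsafe⟩ := hS
  have hgood0 : Good G w S (Comp G S v0) := by
    refine ⟨⟨v0, mem_comp_self _ _⟩, ?_, ?_, ?_, ?_⟩
    · intro v hv
      rw [comp_eq_of_mem hv.1]
    · intro v hv
      exact absurd (comp_subset hv0 hv.1) hv.2
    · intro a ha b hb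
      exact Reach.trans' (Reach.symm' (reach_comp hv0 a ha)) (reach_comp hv0 b hb)
    · have h0 : Comp G S v0 \ S = ∅ := by
        rw [Set.diff_eq_empty]; exact comp_subset hv0
      rw [h0, setWeight_empty]
      exact Nat.zero_le _
  obtain ⟨T, hTgood, hTmax⟩ :=
    Set.Finite.exists_maximalFor (fun T : Set V => T.ncard) {T | Good G w S T}
      (Set.toFinite _) ⟨Comp G S v0, hgood0⟩
  obtain ⟨hTne, hTa, hTb, hTc, hTd⟩ := hTgood
  have hnosup : ∀ T' : Set V, Good G w S T' → T ⊆ T' → T = T' := by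
    intro T' hT' hsub
    by_contra hne
    have hss : T ⊂ T' := HasSubset.Subset.ssubset_of_ne hsub hne
    exact absurd (hTmax (j := T') hT' (Set.ncard_le_ncard hsub (Set.toFinite _)))
      (Nat.not_le_of_lt (Set.ncard_lt_ncard hss (Set.toFinite _)))
  -- extension A: any S-vertex adjacent to T is in T
  have extS : ∀ c ∈ S, ∀ t ∈ T, G.Adj t c → c ∈ T := by
    intro c hcS t ht hadj
    by_contra hcT
    set T' := T ∪ Comp G S c with hT'
    have hsub : T ⊆ T' := Set.subset_union_left
    have hsub2 : Comp G S c ⊆ T' := Set.subset_union_right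
    have hcT' : c ∈ T' := hsub2 (mem_comp_self _ _)
    have hreach : ∀ u ∈ T', Reach G T' t u := by
      intro u hu
      rcases hu with hu | hu
      · exact Reach.mono' hsub (hTc t ht u hu)
      · refine Reach.trans' (Relation.ReflTransGen.single ⟨hsub ht, hcT', hadj⟩) ?_
        exact Reach.mono' hsub2 (reach_comp hcS u hu)
    have hgood' : Good G w S T' := by
      refine ⟨hTne.mono hsub, ?_, ?_, ?_, ?_⟩
      · intro v hv
        rcases hv.1 with hvT | hvC
        · exact (hTa v ⟨hvT, hv.2⟩).trans hsub
        · rw [comp_eq_of_mem hvC]; exact hsub2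
      · intro v hv
        rcases hv.1 with hvT | hvC
        · exact (hTb v ⟨hvT, hv.2⟩).trans hsub
        · exact absurd (comp_subset hcS hvC) hv.2
      · intro a ha b hb
        exact Reach.trans' (Reach.symm' (hreach a ha)) (hreach b hb)
      · have e1 : T' \ S = T \ S := by
          ext y
          simp only [hT', Set.mem_diff, Set.mem_union]
          constructor
          · rintro ⟨hy | hy, hyS⟩
            · exact ⟨hy, hyS⟩
            · exact absurd (comp_subset hcS hy) hyS
          · rintro ⟨hy, hyS⟩; exact ⟨Or.inl hy, hyS⟩
        have e2 : T ∩ S ⊆ T' ∩ S := Set.inter_subset_inter_left _ hsub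
        rw [e1]
        exact hTd.trans (setWeight_mono w e2)
    exact hcT (hnosup T' hgood' hsub ▸ hcT')
  -- extension B : if a component of the complement of S is adjacent to T,
  -- then every S-neighbour of that component is in T
  have extB : ∀ d ∈ Sᶜ, ∀ t ∈ T, G.Adj t d → ∀ x ∈ Comp G Sᶜ d, ∀ c ∈ S,
      G.Adj x c → c ∈ T := by
    intro d hdS t ht hadj x hx c hcS hadj2
    by_cases hdT : d ∈ T
    · exact extS c hcS x (hTb d ⟨hdT, hdS⟩ hx) hadj2
    by_contra hcT
    have hdisj1 : ∀ y ∈ Comp G Sᶜ d, y ∉ T := by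
      intro y hy hyT
      exact hdT (hTb y ⟨hyT, comp_subset hdS hy⟩ (Reach.symm' hy))
    have hdisj2 : ∀ y ∈ Comp G S c, y ∉ T := by
      intro y hy hyT
      exact hcT (hTa y ⟨hyT, comp_subset hcS hy⟩ (Reach.symm' hy))
    set T' := T ∪ Comp G Sᶜ d ∪ Comp G S c with hT'
    have hs1 : T ⊆ T' := Set.subset_union_left.trans Set.subset_union_left
    have hs2 : Comp G Sᶜ d ⊆ T' := Set.subset_union_right.trans Set.subset_union_left
    have hs3 : Comp G S c ⊆ T' := Set.subset_union_right
    have hreach : ∀ u ∈ T', Reach G T' t u := by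
      have hrd : Reach G T' t d :=
        Relation.ReflTransGen.single ⟨hs1 ht, hs2 (mem_comp_self _ _), hadj⟩
      have hrx : Reach G T' t x := hrd.trans' (Reach.mono' hs2 (reach_comp hdS x hx))
      have hrc : Reach G T' t c :=
        hrx.trans' (Relation.ReflTransGen.single ⟨hs2 hx, hs3 (mem_comp_self _ _), hadj2⟩)
      intro u hu
      rcases hu with (hu | hu) | hu
      · exact Reach.mono' hs1 (hTc t ht u hu)
      · exact hrd.trans' (Reach.mono' hs2 (reach_comp hdS u hu))
      · exact hrc.trans' (Reach.mono' hs3 (reach_comp hcS u hu))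
    have hgood' : Good G w S T' := by
      refine ⟨hTne.mono hs1, ?_, ?_, ?_, ?_⟩
      · intro v hv
        rcases hv.1 with (hvT | hvC) | hvC
        · exact (hTa v ⟨hvT, hv.2⟩).trans hs1
        · exact absurd hv.2 (comp_subset hdS hvC)
        · rw [comp_eq_of_mem hvC]; exact hs3
      · intro v hv
        rcases hv.1 with (hvT | hvC) | hvC
        · exact (hTb v ⟨hvT, hv.2⟩).trans hs1
        · rw [comp_eq_of_mem hvC]; exact hs2
        · exact absurd (comp_subset hcS hvC) hv.2
      · intro a ha b hb
        exact Reach.trans' (Reach.symm' (hreach a ha)) (hreach b hb)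
      · have e1 : T' \ S = (T \ S) ∪ Comp G Sᶜ d := by
          ext y
          simp only [hT', Set.mem_diff, Set.mem_union]
          constructor
          · rintro ⟨(hy | hy) | hy, hyS⟩
            · exact Or.inl ⟨hy, hyS⟩
            · exact Or.inr hy
            · exact absurd (comp_subset hcS hy) hyS
          · rintro (⟨hyT, hyS⟩ | hy)
            · exact ⟨Or.inl (Or.inl hyT), hyS⟩
            · exact ⟨Or.inl (Or.inr hy), comp_subset hdS hy⟩
        have e2 : T' ∩ S = (T ∩ S) ∪ Comp G S c := by
          ext y
          simp only [hT', Set.mem_inter_iff, Set.mem_union]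
          constructor
          · rintro ⟨(hy | hy) | hy, hyS⟩
            · exact Or.inl ⟨hy, hyS⟩
            · exact absurd hyS (comp_subset hdS hy)
            · exact Or.inr hy
          · rintro (⟨hyT, hyS⟩ | hy)
            · exact ⟨Or.inl (Or.inl hyT), hyS⟩
            · exact ⟨Or.inr hy, comp_subset hcS hy⟩
        have disj1 : Disjoint (T \ S) (Comp G Sᶜ d) :=
          Set.disjoint_left.mpr fun y hyT hyC => hdisj1 y hyC hyT.1
        have disj2 : Disjoint (T ∩ S) (Comp G S c) :=
          Set.disjoint_left.mpr fun y hyT hyC => hdisj2 y hyC hyT.1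
        have hwdc : setWeight w (Comp G Sᶜ d) ≤ setWeight w (Comp G S c) :=
          hsafe (Comp G S c) (Comp G Sᶜ d) (isCompOf_comp hcS) (isCompOf_comp hdS)
            ⟨c, mem_comp_self _ _, x, hx, hadj2.symm⟩
        rw [e1, e2, setWeight_union w disj1, setWeight_union w disj2]
        exact Nat.add_le_add hTd hwdc
    have hcT' : c ∈ T' := hs3 (mem_comp_self _ _)
    exact hcT (hnosup T' hgood' hs1 ▸ hcT')
  -- T is the desired set
  refine ⟨T, ⟨hTne, ?_⟩, connected_of_reach hTne hTc, ?_⟩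
  · -- safety of T
    rintro C D hC hD ⟨u, hu, v, hv, hadj⟩
    have hCT : C = T := compOf_eq_of_connected hC hTc
    rw [hCT]
    have huT : u ∈ T := hCT ▸ hu
    have hvT : v ∉ T := hD.1 hv
    have hvS : v ∉ S := fun hvS => hvT (extS v hvS u huT hadj)
    have hvSc : v ∈ Sᶜ := hvS
    have huS : u ∈ S := by
      by_contra huS
      exact hvT (hTb u ⟨huT, huS⟩ (Relation.ReflTransGen.single ⟨huS, hvS, hadj⟩))
    have hcompTc : ∀ y ∈ Comp G Sᶜ v, y ∉ T := by
      intro y hy hyT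
      exact hvT (hTb y ⟨hyT, comp_subset hvSc hy⟩ (Reach.symm' hy))
    have hCompD : Comp G Sᶜ v ⊆ D := by
      intro y hy
      induction hy with
      | refl => exact hv
      | @tail b z hvb hbz ih =>
        exact hD.2.2 b ih z (hcompTc z (Relation.ReflTransGen.tail hvb hbz)) hbz.2.2
    have hDComp : D ⊆ Comp G Sᶜ v := by
      intro y hy
      have key : ∀ {z : V}, Reach G D v z → z ∈ Comp G Sᶜ v := by
        intro z hz
        induction hz with
        | refl => exact mem_comp_self _ _
        | @tail b z2 hvb hbz ih =>
          by_cases hz2 : z2 ∈ S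
          · exact absurd (extB v hvSc u huT hadj b ih z2 hz2 hbz.2.2)
              (hD.1 hbz.2.1)
          · exact Relation.ReflTransGen.tail ih ⟨comp_subset hvSc ih, hz2, hbz.2.2⟩
      exact key (reach_of_connected hD.2.1 v hv y hy)
    have hDeq : D = Comp G Sᶜ v := Set.Subset.antisymm hDComp hCompD
    calc setWeight w D = setWeight w (Comp G Sᶜ v) := by rw [hDeq]
      _ ≤ setWeight w (Comp G S u) :=
        hsafe (Comp G S u) (Comp G Sᶜ v) (isCompOf_comp huS) (isCompOf_comp hvSc)
          ⟨u, mem_comp_self _ _, v, mem_comp_self _ _, hadj⟩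
      _ ≤ setWeight w T := setWeight_mono w (hTa u ⟨huT, huS⟩)
  · -- weight bound
    have hsplit : T = (T ∩ S) ∪ (T \ S) := (Set.inter_union_diff T S).symm
    have hdisj : Disjoint (T ∩ S) (T \ S) :=
      Set.disjoint_left.mpr fun y hy hy' => hy'.2 hy.2
    calc setWeight w T = setWeight w (T ∩ S) + setWeight w (T \ S) := by
          conv_lhs => rw [hsplit]
          exact setWeight_union w hdisj
      _ ≤ setWeight w (T ∩ S) + setWeight w (T ∩ S) := Nat.add_le_add_left hTd _
      _ = 2 * setWeight w (T ∩ S) := (Nat.two_mul _).symm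
      _ ≤ 2 * setWeight w S :=
          Nat.mul_le_mul_left 2 (setWeight_mono w Set.inter_subset_right)

end Main


theorem connSafeNum_le_two_mul_safeNum {V : Type*} [Fintype V] [Nonempty V]
    (G : SimpleGraph V) (w : V → ℕ) :
    connSafeNum G w ≤ 2 * safeNum G w := by
  classical
  have huniv : IsSafeSet G w (Set.univ : Set V) := by
    refine ⟨Set.univ_nonempty, fun C D hC hD _ => ?_⟩
    obtain ⟨d, hd⟩ := nonempty_of_connected hD.2.1
    have := hD.1 hd
    simp at this
  have hset : {m | ∃ S : Set V, IsSafeSet G w S ∧ setWeight w S = m}.Nonempty :=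
    ⟨setWeight w Set.univ, Set.univ, huniv, rfl⟩
  obtain ⟨S, hSsafe, hSW⟩ := Nat.sInf_mem hset
  obtain ⟨T, hTsafe, hTconn, hTw⟩ := exists_connected_safe hSsafe
  have h1 : connSafeNum G w ≤ setWeight w T :=
    Nat.sInf_le ⟨T, hTsafe, hTconn, rfl⟩
  have h2 : setWeight w S = safeNum G w := hSW
  calc connSafeNum G w ≤ setWeight w T := h1
    _ ≤ 2 * setWeight w S := hTw
    _ = 2 * safeNum G w := by rw [h2]
end

section
/- Let c₁, …, c_n and K be positive integers with max{c_i : i ∈ [n]} < K < c₁ + … + c_n. Let T be a star with center vertex x and leaves y₁, …, y_{n+1}, and let w : V(T) → ℕ be given by w(x) = 1, w(y_i) = c_i for i ∈ [n], and w(y_{n+1}) = K + 1. Then every nonempty connected w-safe set in T contains the center vertex x. -/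
/-- The star with center `none` and leaves `some i` for `i : Fin m`. -/
def starGraph (m : ℕ) : SimpleGraph (Option (Fin m)) where
  Adj a b := (a = none ∧ b ≠ none) ∨ (b = none ∧ a ≠ none)
  symm := ⟨by intro a b h; tauto⟩
  loopless := ⟨by rintro a (⟨h1, h2⟩ | ⟨h1, h2⟩) <;> exact h2 h1⟩

/-- The weight function on the star: the center gets weight `1`, the first `n` leaves get
weights `c 0, …, c (n-1)`, and the last leaf gets weight `K + 1`. -/
def starW (n : ℕ) (c : Fin n → ℕ) (K : ℕ) : Option (Fin (n + 1)) → ℕ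
  | none => 1
  | some i => if h : (i : ℕ) < n then c ⟨i, h⟩ else K + 1

theorem center_mem_connSafeSet (n : ℕ) (c : Fin n → ℕ) (K : ℕ)
    (hc : ∀ i, 0 < c i) (hK : 0 < K) (hmax : ∀ i, c i < K) (hsum : K < ∑ i, c i)
    (S : Set (Option (Fin (n + 1))))
    (hsafe : IsSafeSet (starGraph (n + 1)) (starW n c K) S)
    (hconn : ((starGraph (n + 1)).induce S).Connected) :
    none ∈ S := by
  by_contra hnone
  obtain ⟨⟨a, haS⟩, hsafe2⟩ := hsafe
  -- the induced graph on S is edgeless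
  have hbot : (starGraph (n + 1)).induce S = ⊥ := by
    ext u v
    simp only [SimpleGraph.comap_adj, SimpleGraph.bot_adj, iff_false]
    rintro (⟨h1, -⟩ | ⟨h1, -⟩)
    · exact hnone (h1 ▸ u.2)
    · exact hnone (h1 ▸ v.2)
  have hsub : Subsingleton S := by
    rw [hbot] at hconn
    exact SimpleGraph.preconnected_bot_iff_subsingleton.mp hconn.preconnected
  have hSsing : S = {a} := by
    apply Set.eq_singleton_iff_unique_mem.mpr
    refine ⟨haS, fun x hx => ?_⟩
    exact Subtype.ext_iff.mp (hsub.elim ⟨x, hx⟩ ⟨a, haS⟩)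
  obtain ⟨i, rfl⟩ : ∃ i, a = some i := by
    cases a with
    | none => exact absurd haS hnone
    | some i => exact ⟨i, rfl⟩
  subst hSsing
  set G := starGraph (n + 1)
  set w := starW n c K
  have hnmem : (none : Option (Fin (n+1))) ∈ ({some i} : Set (Option (Fin (n+1))))ᶜ := by
    simp
  -- S = {some i} is a component of itself
  have hCC : IsCompOf G {some i} {some i} :=
    ⟨subset_rfl, hconn, fun u _ v hv _ => hv⟩
  -- the complement is connected, hence a component of itself
  have hkey : ∀ u : (({some i} : Set (Option (Fin (n+1))))ᶜ : Set _),
      (G.induce (({some i} : Set (Option (Fin (n+1))))ᶜ)).Reachable u ⟨none, hnmem⟩ := by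
    rintro ⟨val, hval⟩
    cases val with
    | none => exact SimpleGraph.Reachable.refl _
    | some j =>
      apply SimpleGraph.Adj.reachable
      show G.Adj (some j) none
      exact Or.inr ⟨rfl, by simp⟩
  have hDconn : (G.induce ({some i} : Set (Option (Fin (n+1))))ᶜ).Connected := by
    haveI : Nonempty (({some i} : Set (Option (Fin (n+1))))ᶜ : Set _) := ⟨⟨none, hnmem⟩⟩
    exact ⟨fun u v => (hkey u).trans (hkey v).symm⟩
  have hDD : IsCompOf G ({some i} : Set (Option (Fin (n+1))))ᶜ ({some i})ᶜ :=
    ⟨subset_rfl, hDconn, fun u _ v hv _ => hv⟩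
  have hadj : ∃ u ∈ ({some i} : Set (Option (Fin (n+1)))), ∃ v ∈ ({some i} : Set (Option (Fin (n+1))))ᶜ,
      G.Adj u v :=
    ⟨some i, rfl, none, hnmem, Or.inr ⟨rfl, by simp⟩⟩
  have hle := hsafe2 {some i} ({some i})ᶜ hCC hDD hadj
  -- compute the weights
  have hwS : setWeight w {some i} = w (some i) := by
    unfold setWeight
    exact finsum_mem_singleton
  have hwD : setWeight w ({some i} : Set (Option (Fin (n+1))))ᶜ
      = ∑ u ∈ ({some i} : Finset (Option (Fin (n+1))))ᶜ, w u := by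
    unfold setWeight
    have : (({some i} : Set (Option (Fin (n+1))))ᶜ)
        = ↑(({some i} : Finset (Option (Fin (n+1))))ᶜ) := by
      simp
    rw [this, finsum_mem_coe_finset]
  have htot : ∑ u ∈ ({some i} : Finset (Option (Fin (n+1))))ᶜ, w u + w (some i)
      = ∑ u, w u := by
    rw [← Finset.sum_singleton (f := w) (a := some i)]
    exact Finset.sum_compl_add_sum _ _
  have hsumall : ∑ u, w u = 1 + ((∑ j, c j) + (K + 1)) := by
    rw [Fintype.sum_option]
    congr 1
    rw [Fin.sum_univ_castSucc]
    congr 1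
    · apply Finset.sum_congr rfl
      intro j _
      show starW n c K (some j.castSucc) = c j
      simp [starW, Fin.is_lt]
    · show starW n c K (some (Fin.last n)) = K + 1
      simp [starW]
  rw [hwS, hwD] at hle
  have hci : ∀ h : (i : ℕ) < n, c ⟨i, h⟩ ≤ ∑ j, c j := fun h =>
    Finset.single_le_sum (fun j _ => Nat.zero_le (c j)) (Finset.mem_univ _)
  by_cases h : (i : ℕ) < n
  · have hw : w (some i) = c ⟨i, h⟩ := by simp [w, starW, h]
    have := hmax ⟨i, h⟩
    have := hci h
    omega
  · have hw : w (some i) = K + 1 := by simp [w, starW, h]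
    omega
end
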